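/- Descent inequality for proximal gradient descent with a weakly convex regularizer: let f : ℝⁿ → ℝ have L-Lipschitz gradient, let g be proper, lower semicontinuous and ρ-weakly convex, let γ ∈ (0, 2/(L+ρ)), and let x_{k+1} ∈ prox_{γg}(x_k − γ∇f(x_k)). Then (1/γ − (L+ρ)/2) ‖x_k − x_{k+1}‖² ≤ F(x_k) − F(x_{k+1}), where F = f + g. -/

import Mathlib

open scoped RealInnerProductSpace
open Filter Topology

noncomputable section

set_option maxHeartbeats 1000000 in
lemma descent_lemma {n : ℕ} (L : ℝ) (hL : 0 ≤ L) (f : EuclideanSpace ℝ (Fin n) → ℝ)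
    (Gf : EuclideanSpace ℝ (Fin n) → EuclideanSpace ℝ (Fin n))
    (hGf : ∀ x, HasGradientAt f (Gf x) x) (hLip : LipschitzWith (Real.toNNReal L) Gf)
    (x y : EuclideanSpace ℝ (Fin n)) :
    f y ≤ f x + ⟪Gf x, y - x⟫ + L / 2 * ‖y - x‖ ^ 2 := by
  set d := y - x with hd
  set c : ℝ → EuclideanSpace ℝ (Fin n) := fun t => x + t • d with hc
  have hcont : Continuous Gf := hLip.continuous
  have hcderiv : ∀ t : ℝ, HasDerivAt c d t := by
    intro t
    have := ((hasDerivAt_id t).smul_const d).const_add x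
    simp only [id, one_smul] at this
    exact this
  have hφ : ∀ t : ℝ, HasDerivAt (fun t => f (c t)) ⟪Gf (c t), d⟫ t := by
    intro t
    have h1 := (hGf (c t)).hasFDerivAt.comp_hasDerivAt t (hcderiv t)
    simpa [InnerProductSpace.toDual_apply_apply, Function.comp_def] using h1
  have hcc : Continuous c := by continuity
  have hint : IntervalIntegrable (fun t => ⟪Gf (c t), d⟫) MeasureTheory.volume 0 1 :=
    (Continuous.inner (hcont.comp hcc) continuous_const).intervalIntegrable 0 1
  have heq : ∫ t in (0:ℝ)..1, ⟪Gf (c t), d⟫ = f (c 1) - f (c 0) :=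
    intervalIntegral.integral_eq_sub_of_hasDerivAt (fun t _ => hφ t) hint
  have hc0 : c 0 = x := by simp [hc]
  have hc1 : c 1 = y := by simp [hc, hd]
  have hbound : ∀ t ∈ Set.Icc (0:ℝ) 1, ⟪Gf (c t), d⟫ ≤ ⟪Gf x, d⟫ + L * t * ‖d‖ ^ 2 := by
    intro t ht
    have h1 : ⟪Gf (c t) - Gf x, d⟫ ≤ ‖Gf (c t) - Gf x‖ * ‖d‖ := real_inner_le_norm _ _
    have h2 : ‖Gf (c t) - Gf x‖ ≤ L * (t * ‖d‖) := by
      have := hLip.dist_le_mul (c t) x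
      rw [Real.coe_toNNReal _ hL] at this
      have hdist : dist (c t) x = t * ‖d‖ := by
        simp [hc, dist_eq_norm, norm_smul, abs_of_nonneg ht.1]
      rw [dist_eq_norm] at hdist
      calc ‖Gf (c t) - Gf x‖ = dist (Gf (c t)) (Gf x) := (dist_eq_norm _ _).symm
        _ ≤ L * dist (c t) x := this
        _ = L * (t * ‖d‖) := by rw [dist_eq_norm, hdist]
    have h3 : ⟪Gf (c t) - Gf x, d⟫ ≤ L * t * ‖d‖ ^ 2 := by
      calc ⟪Gf (c t) - Gf x, d⟫ ≤ ‖Gf (c t) - Gf x‖ * ‖d‖ := h1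
        _ ≤ L * (t * ‖d‖) * ‖d‖ := by
            apply mul_le_mul_of_nonneg_right h2 (norm_nonneg _)
        _ = L * t * ‖d‖ ^ 2 := by ring
    have h4 : ⟪Gf (c t), d⟫ - ⟪Gf x, d⟫ ≤ L * t * ‖d‖ ^ 2 := by
      rw [← inner_sub_left]; exact h3
    linarith
  have hint2 : IntervalIntegrable (fun t : ℝ => ⟪Gf x, d⟫ + L * t * ‖d‖ ^ 2)
      MeasureTheory.volume 0 1 := by
    apply Continuous.intervalIntegrable; continuity
  have hmono := intervalIntegral.integral_mono_on (by norm_num : (0:ℝ) ≤ 1) hint hint2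
    (fun t ht => hbound t ht)
  have hrhs : ∫ t in (0:ℝ)..1, (⟪Gf x, d⟫ + L * t * ‖d‖ ^ 2)
      = ⟪Gf x, d⟫ + L / 2 * ‖d‖ ^ 2 := by
    have : (fun t : ℝ => ⟪Gf x, d⟫ + L * t * ‖d‖ ^ 2)
        = fun t : ℝ => ⟪Gf x, d⟫ + (L * ‖d‖ ^ 2) * t := by funext t; ring
    rw [this, intervalIntegral.integral_add (f := fun _ : ℝ => ⟪Gf x, d⟫)
      (g := fun t : ℝ => L * ‖d‖ ^ 2 * t) intervalIntegrable_const
      ((continuous_const.mul continuous_id').intervalIntegrable 0 1),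
      intervalIntegral.integral_const_mul, integral_id]
    simp
    ring
  rw [heq, hc0, hc1] at hmono
  rw [hrhs] at hmono
  linarith


set_option maxHeartbeats 1000000 in
theorem stmt_11 {n : ℕ} (L ρ γ : ℝ) (hL : 0 ≤ L)
    (f g : EuclideanSpace ℝ (Fin n) → ℝ)
    (Gf : EuclideanSpace ℝ (Fin n) → EuclideanSpace ℝ (Fin n))
    (hGf : ∀ x, HasGradientAt f (Gf x) x)
    (hLip : LipschitzWith (Real.toNNReal L) Gf)
    (hg_lsc : LowerSemicontinuous g)
    (hg_wc : ConvexOn ℝ Set.univ (fun x => g x + ρ / 2 * ‖x‖ ^ 2))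
    (hγ0 : 0 < γ) (hγ2 : γ < 2 / (L + ρ))
    (x0 x1 : EuclideanSpace ℝ (Fin n))
    (hstep : IsMinOn (fun z => g z + ‖z - (x0 - γ • Gf x0)‖ ^ 2 / (2 * γ)) Set.univ x1) :
    (1 / γ - (L + ρ) / 2) * ‖x0 - x1‖ ^ 2
      ≤ (f x0 + g x0) - (f x1 + g x1) := by
  set v := x0 - γ • Gf x0 with hv
  set d := x0 - x1 with hd
  -- key convexity (subgradient) inequality
  have key : g x1 + ρ / 2 * ‖x1‖ ^ 2 + ρ * ⟪x1, d⟫ - ⟪x1 - v, d⟫ / γ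
      ≤ g x0 + ρ / 2 * ‖x0‖ ^ 2 := by
    apply le_of_forall_pos_le_add
    intro ε hε
    set c : ℝ := (1 / γ - ρ) / 2 * ‖d‖ ^ 2 with hcdef
    set C : ℝ := |c| + 1 with hCdef
    have hC0 : 0 < C := by positivity
    set t : ℝ := min 1 (ε / C) with htdef
    have ht0 : 0 < t := lt_min one_pos (by positivity)
    have ht1 : t ≤ 1 := min_le_left _ _
    have htC : t ≤ ε / C := min_le_right _ _
    have htc : t * c ≤ ε := by
      rcases le_or_gt c 0 with hc | hc
      · nlinarith
      · have h1 : c ≤ C := by rw [hCdef]; nlinarith [le_abs_self c]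
        calc t * c ≤ (ε / C) * c := by nlinarith
          _ ≤ (ε / C) * C := by
              apply mul_le_mul_of_nonneg_left h1 (by positivity)
          _ = ε := by field_simp
    set z : EuclideanSpace ℝ (Fin n) := x1 + t • d with hz
    have hz' : z = (1 - t) • x1 + t • x0 := by
      rw [hz, hd, sub_smul, one_smul, smul_sub]; abel
    have h1 : g x1 + ‖x1 - v‖ ^ 2 / (2 * γ) ≤ g z + ‖z - v‖ ^ 2 / (2 * γ) :=
      isMinOn_iff.mp hstep z (Set.mem_univ z)
    have h2 : g z + ρ / 2 * ‖z‖ ^ 2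
        ≤ (1 - t) * (g x1 + ρ / 2 * ‖x1‖ ^ 2) + t * (g x0 + ρ / 2 * ‖x0‖ ^ 2) := by
      have := hg_wc.2 (Set.mem_univ x1) (Set.mem_univ x0)
        (by linarith : (0:ℝ) ≤ 1 - t) ht0.le (by ring)
      simpa [← hz'] using this
    have e1 : ‖z - v‖ ^ 2 = ‖x1 - v‖ ^ 2 + 2 * (t * ⟪x1 - v, d⟫) + t ^ 2 * ‖d‖ ^ 2 := by
      have hzv : z - v = (x1 - v) + t • d := by rw [hz]; abel
      rw [hzv, norm_add_sq_real, real_inner_smul_right, norm_smul]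
      simp [abs_of_pos ht0]
      ring
    have e2 : ‖z‖ ^ 2 = ‖x1‖ ^ 2 + 2 * (t * ⟪x1, d⟫) + t ^ 2 * ‖d‖ ^ 2 := by
      rw [hz, norm_add_sq_real, real_inner_smul_right, norm_smul]
      simp [abs_of_pos ht0]
      ring
    -- combine and divide by t
    have hmain : t * (g x1 + ρ / 2 * ‖x1‖ ^ 2 + ρ * ⟪x1, d⟫ - ⟪x1 - v, d⟫ / γ)
        ≤ t * (g x0 + ρ / 2 * ‖x0‖ ^ 2 + t * c) := by
      have hγ0' : (0:ℝ) < 2 * γ := by linarith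
      rw [e1] at h1
      rw [e2] at h2
      have h1' : g x1 ≤ g z + (2 * (t * ⟪x1 - v, d⟫) + t ^ 2 * ‖d‖ ^ 2) / (2 * γ) := by
        have : (‖x1 - v‖ ^ 2 + 2 * (t * ⟪x1 - v, d⟫) + t ^ 2 * ‖d‖ ^ 2) / (2 * γ)
            = ‖x1 - v‖ ^ 2 / (2 * γ)
              + (2 * (t * ⟪x1 - v, d⟫) + t ^ 2 * ‖d‖ ^ 2) / (2 * γ) := by ring
        linarith [h1, this ▸ h1]
      have hdiv : (2 * (t * ⟪x1 - v, d⟫) + t ^ 2 * ‖d‖ ^ 2) / (2 * γ)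
          = t * ⟪x1 - v, d⟫ / γ + t ^ 2 * ‖d‖ ^ 2 / (2 * γ) := by
        field_simp
      rw [hdiv] at h1'
      have hc' : t * (t * c) = t ^ 2 * ‖d‖ ^ 2 / (2 * γ) - t ^ 2 * (ρ / 2) * ‖d‖ ^ 2 := by
        rw [hcdef]; field_simp
      have htinner : t * (⟪x1 - v, d⟫ / γ) = t * ⟪x1 - v, d⟫ / γ := by ring
      nlinarith [h1', h2]
    have := le_of_mul_le_mul_left (by linarith [hmain] :
      t * (g x1 + ρ / 2 * ‖x1‖ ^ 2 + ρ * ⟪x1, d⟫ - ⟪x1 - v, d⟫ / γ)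
        ≤ t * (g x0 + ρ / 2 * ‖x0‖ ^ 2 + t * c)) ht0
    linarith
  -- descent lemma
  have desc : f x1 ≤ f x0 + ⟪Gf x0, x1 - x0⟫ + L / 2 * ‖x1 - x0‖ ^ 2 :=
    descent_lemma L hL f Gf hGf hLip x0 x1
  -- scalar identities
  have i1 : ⟪x1 - v, d⟫ = -‖d‖ ^ 2 + γ * ⟪Gf x0, d⟫ := by
    have hx1v : x1 - v = -d + γ • Gf x0 := by rw [hv, hd]; abel
    rw [hx1v, inner_add_left, real_inner_smul_left, inner_neg_left,
      real_inner_self_eq_norm_sq]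
  have i2 : ⟪Gf x0, x1 - x0⟫ = -⟪Gf x0, d⟫ := by
    rw [hd, ← inner_neg_right]; congr 1; abel
  have i3 : ‖x0‖ ^ 2 = ‖x1‖ ^ 2 + 2 * ⟪x1, d⟫ + ‖d‖ ^ 2 := by
    have : x0 = x1 + d := by rw [hd]; abel
    rw [this, norm_add_sq_real]
  have i4 : ‖x1 - x0‖ = ‖d‖ := by rw [hd, norm_sub_rev]
  have i5 : ⟪x1 - v, d⟫ / γ = -(1 / γ) * ‖d‖ ^ 2 + ⟪Gf x0, d⟫ := by
    rw [i1]; field_simp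
  rw [i4] at desc
  rw [i2] at desc
  rw [i5] at key
  rw [i3] at key
  nlinarith [key, desc]
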